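/- Let U, V be finite sets, E ⊆ U × V a set of edges, and φ_{x,y} : [L] → [R] a map for each (x, y) ∈ E. Let t ≥ 1 and d ≥ 2, let X ⊆ U, and for each x ∈ X let L_x ⊆ [L] be a nonempty set with |L_x| ≤ t. Suppose that for every y ∈ V and every choice (with repetition allowed) of x₁, …, x_d ∈ X all adjacent to y (i.e., (x_i, y) ∈ E for each i), there exist distinct indices i, i' ∈ [d] with φ_{x_i,y}(L_{x_i}) ∩ φ_{x_{i'},y}(L_{x_{i'}}) ≠ ∅. Then there exist assignments A_U : U → [L] and A_V : V → [R] such that t² · (d − 1) · |{(x, y) ∈ E : x ∈ X and φ_{x,y}(A_U(x)) = A_V(y)}| ≥ |{(x, y) ∈ E : x ∈ X}|. -/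

import Mathlib

/-- **List-decoding to labeling (soundness of Lemma 5.2).** Given nonempty
candidate label lists `L_x` of size at most `t` for each `x ∈ X` such that
among any `d` neighbors (with repetition) of a common vertex `y` some two
projected lists intersect, there is an assignment satisfying at least a
`1/(t²(d−1))` fraction of the constraints touching `X`. -/
theorem listDecoding_labeling_d {U V : Type*} [Fintype U] [Fintype V]
    [DecidableEq U] [DecidableEq V]
    (L R t d : ℕ) (hL : 0 < L) (hR : 0 < R) (ht : 1 ≤ t) (hd : 2 ≤ d)
    (E : Finset (U × V)) (φ : U → V → Fin L → Fin R)
    (X : Finset U) (Lx : U → Finset (Fin L))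
    (hne : ∀ x ∈ X, (Lx x).Nonempty)
    (hsize : ∀ x ∈ X, (Lx x).card ≤ t)
    (hint : ∀ y : V, ∀ g : Fin d → U,
      (∀ i, g i ∈ X ∧ (g i, y) ∈ E) →
      ∃ i i' : Fin d, i ≠ i' ∧
        (((Lx (g i)).image (φ (g i) y)) ∩
          ((Lx (g i')).image (φ (g i') y))).Nonempty) :
    ∃ (A_U : U → Fin L) (A_V : V → Fin R),
      (E.filter (fun p => p.1 ∈ X)).card ≤
        t ^ 2 * (d - 1) * (E.filter (fun p =>
          p.1 ∈ X ∧ φ p.1 p.2 (A_U p.1) = A_V p.2)).card := by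
  classical
  -- Choose A_V y as the label maximizing the number of covered edges into y.
  have hex : ∀ y : V, ∃ r : Fin R, ∀ r' : Fin R,
      (E.filter (fun p => p.1 ∈ X ∧ p.2 = y ∧ r' ∈ (Lx p.1).image (φ p.1 y))).card ≤
      (E.filter (fun p => p.1 ∈ X ∧ p.2 = y ∧ r ∈ (Lx p.1).image (φ p.1 y))).card := by
    intro y
    haveI : Nonempty (Fin R) := ⟨⟨0, hR⟩⟩
    exact Finite.exists_max (fun r => (E.filter
      (fun p => p.1 ∈ X ∧ p.2 = y ∧ r ∈ (Lx p.1).image (φ p.1 y))).card)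
  choose A_V hAV using hex
  -- the count of "good" edges into y
  set cnt : V → ℕ := fun y =>
    (E.filter (fun p => p.1 ∈ X ∧ p.2 = y ∧ A_V y ∈ (Lx p.1).image (φ p.1 y))).card with hcnt
  -- Key covering lemma at each y
  have key1 : ∀ y : V,
      (E.filter (fun p => p.1 ∈ X ∧ p.2 = y)).card ≤ t * (d - 1) * cnt y := by
    intro y
    set F := E.filter (fun p => p.1 ∈ X ∧ p.2 = y) with hF
    have hmemF : ∀ p ∈ F, p.1 ∈ X ∧ p.2 = y ∧ p ∈ E := by
      intro p hp
      rw [hF, Finset.mem_filter] at hp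
      exact ⟨hp.2.1, hp.2.2, hp.1⟩
    -- maximal pairwise-disjoint subfamily
    obtain ⟨S, hS, hSmax⟩ := Finset.exists_max_image
      (F.powerset.filter (fun S => ∀ p ∈ S, ∀ q ∈ S, p ≠ q →
        Disjoint ((Lx p.1).image (φ p.1 y)) ((Lx q.1).image (φ q.1 y))))
      Finset.card ⟨∅, by simp⟩
    rw [Finset.mem_filter, Finset.mem_powerset] at hS
    obtain ⟨hSF, hSdisj⟩ := hS
    have hScard : S.card ≤ d - 1 := by
      by_contra hcon
      push_neg at hcon
      have hd' : d ≤ S.card := by omega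
      obtain ⟨S', hS'S, hS'card⟩ := Finset.exists_subset_card_eq hd'
      let e := S'.equivFin
      let pk : Fin d → U × V := fun i => (e.symm ⟨i.1, by rw [hS'card]; exact i.2⟩ : U × V)
      have hpkS : ∀ i, pk i ∈ S := fun i => hS'S (e.symm _).2
      have hpkF : ∀ i, pk i ∈ F := fun i => hSF (hpkS i)
      have hg : ∀ i : Fin d, (pk i).1 ∈ X ∧ ((pk i).1, y) ∈ E := by
        intro i
        obtain ⟨h1, h2, h3⟩ := hmemF _ (hpkF i)
        refine ⟨h1, ?_⟩
        rw [← h2]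
        exact h3
      obtain ⟨i, i', hii, hnonempty⟩ := hint y (fun i => (pk i).1) hg
      have hpkne : pk i ≠ pk i' := by
        intro hpq
        apply hii
        have h2 := e.symm.injective (Subtype.ext hpq)
        have h3 : i.1 = i'.1 := by injection h2
        exact Fin.ext h3
      have hdisj := hSdisj _ (hpkS i) _ (hpkS i') hpkne
      rw [Finset.disjoint_iff_inter_eq_empty] at hdisj
      rw [hdisj] at hnonempty
      exact Finset.not_nonempty_empty hnonempty
    -- maximality gives covering
    have hcover : ∀ p ∈ F, ∃ q ∈ S,
        (((Lx p.1).image (φ p.1 y)) ∩ ((Lx q.1).image (φ q.1 y))).Nonempty := by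
      intro p hp
      by_cases hpS : p ∈ S
      · obtain ⟨a, ha⟩ := hne p.1 (hmemF p hp).1
        exact ⟨p, hpS, ⟨φ p.1 y a, Finset.mem_inter.2
          ⟨Finset.mem_image_of_mem _ ha, Finset.mem_image_of_mem _ ha⟩⟩⟩
      · by_contra hno
        push_neg at hno
        have hall : ∀ q ∈ S,
            Disjoint ((Lx p.1).image (φ p.1 y)) ((Lx q.1).image (φ q.1 y)) := by
          intro q hq
          rw [Finset.disjoint_iff_inter_eq_empty]
          exact hno q hq
        have hmem' : insert p S ∈ F.powerset.filter (fun S => ∀ p ∈ S, ∀ q ∈ S, p ≠ q →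
            Disjoint ((Lx p.1).image (φ p.1 y)) ((Lx q.1).image (φ q.1 y))) := by
          rw [Finset.mem_filter, Finset.mem_powerset]
          constructor
          · exact Finset.insert_subset hp hSF
          · intro a ha b hb hab
            rcases Finset.mem_insert.1 ha with rfl | ha'
            · rcases Finset.mem_insert.1 hb with rfl | hb'
              · exact absurd rfl hab
              · exact hall b hb'
            · rcases Finset.mem_insert.1 hb with rfl | hb'
              · exact (hall a ha').symm
              · exact hSdisj a ha' b hb' hab
        have := hSmax _ hmem'
        rw [Finset.card_insert_of_notMem hpS] at this
        omega
    -- the union of the projected lists of S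
    set T := S.biUnion (fun q => (Lx q.1).image (φ q.1 y)) with hT
    have hTcard : T.card ≤ (d - 1) * t := by
      calc T.card ≤ ∑ q ∈ S, ((Lx q.1).image (φ q.1 y)).card := Finset.card_biUnion_le
        _ ≤ S.card • t := by
            apply Finset.sum_le_card_nsmul
            intro q hq
            exact le_trans (Finset.card_image_le) (hsize q.1 (hmemF q (hSF hq)).1)
        _ = S.card * t := by rw [smul_eq_mul]
        _ ≤ (d - 1) * t := Nat.mul_le_mul_right t hScard
    have hFsub : F ⊆ T.biUnion (fun r => F.filter (fun p => r ∈ (Lx p.1).image (φ p.1 y))) := by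
      intro p hp
      obtain ⟨q, hq, r, hr⟩ := hcover p hp
      rw [Finset.mem_inter] at hr
      exact Finset.mem_biUnion.2 ⟨r, Finset.mem_biUnion.2 ⟨q, hq, hr.2⟩,
        Finset.mem_filter.2 ⟨hp, hr.1⟩⟩
    have hfilt : ∀ r : Fin R,
        (F.filter (fun p => r ∈ (Lx p.1).image (φ p.1 y))).card ≤ cnt y := by
      intro r
      have heq : F.filter (fun p => r ∈ (Lx p.1).image (φ p.1 y)) =
          E.filter (fun p => p.1 ∈ X ∧ p.2 = y ∧ r ∈ (Lx p.1).image (φ p.1 y)) := by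
        ext p
        simp only [hF, Finset.mem_filter]
        tauto
      rw [heq, hcnt]
      exact hAV y r
    calc F.card ≤ (T.biUnion (fun r => F.filter (fun p => r ∈ (Lx p.1).image (φ p.1 y)))).card :=
          Finset.card_le_card hFsub
      _ ≤ ∑ r ∈ T, (F.filter (fun p => r ∈ (Lx p.1).image (φ p.1 y))).card :=
          Finset.card_biUnion_le
      _ ≤ T.card • cnt y := Finset.sum_le_card_nsmul _ _ _ (fun r _ => hfilt r)
      _ = T.card * cnt y := by rw [smul_eq_mul]
      _ ≤ ((d - 1) * t) * cnt y := Nat.mul_le_mul_right _ hTcard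
      _ = t * (d - 1) * cnt y := by ring
  -- choose A_U x maximizing the satisfied count among Lx x
  have hexU : ∀ x : U, ∃ a : Fin L, x ∈ X → a ∈ Lx x ∧ ∀ a' ∈ Lx x,
      (E.filter (fun p => p.1 = x ∧ A_V p.2 ∈ (Lx x).image (φ x p.2) ∧
        φ x p.2 a' = A_V p.2)).card ≤
      (E.filter (fun p => p.1 = x ∧ A_V p.2 ∈ (Lx x).image (φ x p.2) ∧
        φ x p.2 a = A_V p.2)).card := by
    intro x
    by_cases hx : x ∈ X
    · obtain ⟨a, haLx, hmax⟩ := Finset.exists_max_image (Lx x)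
        (fun a => (E.filter (fun p => p.1 = x ∧ A_V p.2 ∈ (Lx x).image (φ x p.2) ∧
          φ x p.2 a = A_V p.2)).card) (hne x hx)
      exact ⟨a, fun _ => ⟨haLx, hmax⟩⟩
    · exact ⟨⟨0, hL⟩, fun h => absurd h hx⟩
  choose A_U hAU using hexU
  refine ⟨A_U, A_V, ?_⟩
  -- Claim A : |E_X| ≤ t (d-1) |Good|
  have h1 : (E.filter (fun p => p.1 ∈ X)).card
      = ∑ y : V, (E.filter (fun p => p.1 ∈ X ∧ p.2 = y)).card := by
    rw [Finset.card_eq_sum_card_fiberwise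
      (f := Prod.snd) (t := Finset.univ) (fun p _ => Finset.mem_univ _)]
    apply Finset.sum_congr rfl
    intro y _
    rw [Finset.filter_filter]
  have h2 : (E.filter (fun p => p.1 ∈ X ∧ A_V p.2 ∈ (Lx p.1).image (φ p.1 p.2))).card
      = ∑ y : V, cnt y := by
    rw [Finset.card_eq_sum_card_fiberwise
      (f := Prod.snd) (t := Finset.univ) (fun p _ => Finset.mem_univ _)]
    apply Finset.sum_congr rfl
    intro y _
    congr 1
    rw [Finset.filter_filter]
    ext p
    simp only [Finset.mem_filter]
    constructor
    · rintro ⟨hpE, ⟨hX, hmem⟩, hy⟩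
      subst hy
      exact ⟨hpE, hX, rfl, hmem⟩
    · rintro ⟨hpE, hX, hy, hmem⟩
      subst hy
      exact ⟨hpE, ⟨hX, hmem⟩, rfl⟩
  have hA : (E.filter (fun p => p.1 ∈ X)).card ≤
      t * (d - 1) * (E.filter (fun p => p.1 ∈ X ∧ A_V p.2 ∈ (Lx p.1).image (φ p.1 p.2))).card := by
    rw [h1, h2, Finset.mul_sum]
    exact Finset.sum_le_sum (fun y _ => key1 y)
  -- Claim B : |Good| ≤ t |Sat|
  have hB : (E.filter (fun p => p.1 ∈ X ∧ A_V p.2 ∈ (Lx p.1).image (φ p.1 p.2))).card ≤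
      t * (E.filter (fun p => p.1 ∈ X ∧ φ p.1 p.2 (A_U p.1) = A_V p.2)).card := by
    rw [Finset.card_eq_sum_card_fiberwise
      (f := Prod.fst) (t := Finset.univ) (s := E.filter (fun p => p.1 ∈ X ∧ A_V p.2 ∈ (Lx p.1).image (φ p.1 p.2))) (fun p _ => Finset.mem_univ _)]
    rw [Finset.card_eq_sum_card_fiberwise
      (f := Prod.fst) (t := Finset.univ) (s := E.filter (fun p => p.1 ∈ X ∧ φ p.1 p.2 (A_U p.1) = A_V p.2)) (fun p _ => Finset.mem_univ _)]
    rw [Finset.mul_sum]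
    apply Finset.sum_le_sum
    intro x _
    by_cases hx : x ∈ X
    · obtain ⟨haLx, hmax⟩ := hAU x hx
      have hsub : ((E.filter (fun p => p.1 ∈ X ∧ A_V p.2 ∈ (Lx p.1).image (φ p.1 p.2))).filter
            (fun p => p.1 = x)) ⊆
          (Lx x).biUnion (fun a => E.filter (fun p => p.1 = x ∧
            A_V p.2 ∈ (Lx x).image (φ x p.2) ∧ φ x p.2 a = A_V p.2)) := by
        intro p hp
        simp only [Finset.mem_filter] at hp
        obtain ⟨⟨hpE, hX, hmem⟩, hpx⟩ := hp
        rw [hpx] at hmem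
        obtain ⟨a, haLx', hfa⟩ := Finset.mem_image.1 hmem
        exact Finset.mem_biUnion.2 ⟨a, haLx',
          Finset.mem_filter.2 ⟨hpE, hpx, hmem, hfa⟩⟩
      have hstep1 : ((E.filter (fun p => p.1 ∈ X ∧ A_V p.2 ∈ (Lx p.1).image (φ p.1 p.2))).filter
            (fun p => p.1 = x)).card ≤
          t * (E.filter (fun p => p.1 = x ∧ A_V p.2 ∈ (Lx x).image (φ x p.2) ∧
            φ x p.2 (A_U x) = A_V p.2)).card := by
        calc _ ≤ ((Lx x).biUnion (fun a => E.filter (fun p => p.1 = x ∧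
              A_V p.2 ∈ (Lx x).image (φ x p.2) ∧ φ x p.2 a = A_V p.2))).card :=
              Finset.card_le_card hsub
          _ ≤ ∑ a ∈ Lx x, (E.filter (fun p => p.1 = x ∧
              A_V p.2 ∈ (Lx x).image (φ x p.2) ∧ φ x p.2 a = A_V p.2)).card :=
              Finset.card_biUnion_le
          _ ≤ (Lx x).card • (E.filter (fun p => p.1 = x ∧
              A_V p.2 ∈ (Lx x).image (φ x p.2) ∧ φ x p.2 (A_U x) = A_V p.2)).card :=
              Finset.sum_le_card_nsmul _ _ _ (fun a ha => hmax a ha)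
          _ = (Lx x).card * _ := by rw [smul_eq_mul]
          _ ≤ t * _ := Nat.mul_le_mul_right _ (hsize x hx)
      have hstep2 : (E.filter (fun p => p.1 = x ∧ A_V p.2 ∈ (Lx x).image (φ x p.2) ∧
            φ x p.2 (A_U x) = A_V p.2)) ⊆
          ((E.filter (fun p => p.1 ∈ X ∧ φ p.1 p.2 (A_U p.1) = A_V p.2)).filter
            (fun p => p.1 = x)) := by
        intro p hp
        simp only [Finset.mem_filter] at hp ⊢
        obtain ⟨hpE, hpx, hmem, hfa⟩ := hp
        refine ⟨⟨hpE, ?_, ?_⟩, hpx⟩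
        · rw [hpx]; exact hx
        · rw [hpx]; exact hfa
      calc _ ≤ t * (E.filter (fun p => p.1 = x ∧ A_V p.2 ∈ (Lx x).image (φ x p.2) ∧
            φ x p.2 (A_U x) = A_V p.2)).card := hstep1
        _ ≤ t * ((E.filter (fun p => p.1 ∈ X ∧ φ p.1 p.2 (A_U p.1) = A_V p.2)).filter
            (fun p => p.1 = x)).card := Nat.mul_le_mul_left t (Finset.card_le_card hstep2)
    · have hempty : ((E.filter (fun p => p.1 ∈ X ∧ A_V p.2 ∈ (Lx p.1).image (φ p.1 p.2))).filter
          (fun p => p.1 = x)) = ∅ := by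
        rw [Finset.eq_empty_iff_forall_notMem]
        intro p hp
        simp only [Finset.mem_filter] at hp
        exact hx (hp.2 ▸ hp.1.2.1)
      rw [hempty]
      simp
  calc (E.filter (fun p => p.1 ∈ X)).card
      ≤ t * (d - 1) * (E.filter (fun p => p.1 ∈ X ∧
        A_V p.2 ∈ (Lx p.1).image (φ p.1 p.2))).card := hA
    _ ≤ t * (d - 1) * (t * (E.filter (fun p => p.1 ∈ X ∧
        φ p.1 p.2 (A_U p.1) = A_V p.2)).card) := Nat.mul_le_mul_left _ hB
    _ = t ^ 2 * (d - 1) * (E.filter (fun p =>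
        p.1 ∈ X ∧ φ p.1 p.2 (A_U p.1) = A_V p.2)).card := by ring
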